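/- Let X and A be standard Borel spaces, let Gr(A) ⊆ X×A be a measurable set containing the graph of a measurable map from X to A, and write A(x) := {a ∈ A : (x,a) ∈ Gr(A)} (so A(x) ≠ ∅ for every x). Suppose for each t ∈ ℝ₊ := [0,∞) a measure μ_t on (X×A, 𝓑(X×A)) is given with μ_t(X×A) ≤ 1 and μ_t((X×A)∖Gr(A)) = 0, and such that t ↦ μ_t(D) is Borel measurable for every D ∈ 𝓑(X×A); write ν_t(B) := μ_t(B×A) for B ∈ 𝓑(X). Then there exists a transition probability φ from (ℝ₊×X, 𝓑(ℝ₊×X)) to (A, 𝓑(A)) — i.e., φ(·|x,t) is a probability measure on (A,𝓑(A)) for each (x,t), and (x,t) ↦ φ(U|x,t) is Borel measurable for each U ∈ 𝓑(A) — such that φ(A(x)|x,t) = 1 for all x ∈ X and t ∈ ℝ₊, and for every t ∈ ℝ₊ and U ∈ 𝓑(A), the function x ↦ φ(U|x,t) is a version of the Radon–Nikodym derivative of the measure B ↦ μ_t(B×U) with respect to ν_t (equality holding for ν_t-almost every x ∈ X). -/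

import Mathlib

open MeasureTheory Set ProbabilityTheory
open scoped ENNReal

/-- existence of a Markov policy / measurable disintegration: let `X`
and `A` be standard Borel spaces, `Gr ⊆ X × A` a measurable set of feasible state–action
pairs containing the graph of a measurable map `f : X → A`, and for each `t ∈ ℝ₊` let
`μ t` be a subprobability measure on `X × A` concentrated on `Gr`, measurably in `t`.
Then there is a transition probability `φ` from `ℝ₊ × X` to `A` with `φ(A(x)|x,t) = 1`
for all `x, t`, such that for each `t` and each Borel `U ⊆ A` the function
`x ↦ φ(U|x,t)` is a version of the Radon–Nikodym derivative of `B ↦ μ t (B × U)` with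
respect to the marginal `ν t = (μ t) ∘ proj⁻¹`. -/
theorem exists_markov_disintegration
    {X A : Type*} [MeasurableSpace X] [StandardBorelSpace X]
    [MeasurableSpace A] [StandardBorelSpace A]
    (Gr : Set (X × A)) (hGr : MeasurableSet Gr)
    (f : X → A) (hf : Measurable f) (hfGr : ∀ x, (x, f x) ∈ Gr)
    (μ : ℝ → Measure (X × A))
    (hsub : ∀ t : ℝ, 0 ≤ t → μ t Set.univ ≤ 1)
    (hsupp : ∀ t : ℝ, 0 ≤ t → μ t Grᶜ = 0)
    (hmeas : ∀ D : Set (X × A), MeasurableSet D → Measurable fun t => μ t D) :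
    ∃ φ : ℝ × X → Measure A,
      (∀ p : ℝ × X, IsProbabilityMeasure (φ p)) ∧
      (∀ U : Set A, MeasurableSet U → Measurable fun p : ℝ × X => φ p U) ∧
      (∀ (x : X) (t : ℝ), 0 ≤ t → φ (t, x) {a : A | (x, a) ∈ Gr} = 1) ∧
      (∀ t : ℝ, 0 ≤ t → ∀ U : Set A, MeasurableSet U → ∀ B : Set X, MeasurableSet B →
        μ t (B ×ˢ U) = ∫⁻ x in B, φ (t, x) U ∂((μ t).map Prod.fst)) := by
  rcases isEmpty_or_nonempty X with hX | hX
  · -- Degenerate case: `X` is empty.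
    have hμ0 : ∀ t, (μ t) = 0 := fun t => Subsingleton.elim _ _
    refine ⟨fun p => isEmptyElim p.2, fun p => isEmptyElim p.2, ?_, fun x => isEmptyElim x, ?_⟩
    · intro U hU
      have : IsEmpty (ℝ × X) := ⟨fun p => isEmptyElim p.2⟩
      exact measurable_of_empty _
    · intro t ht U hU B hB
      simp [hμ0 t]
  · obtain ⟨x₀⟩ := hX
    have hA : Nonempty A := ⟨f x₀⟩
    -- Build a finite kernel `κ : ℝ → Measure (X × A)`.
    set m : ℝ → Measure (X × A) := fun t => if 0 ≤ t then μ t else Measure.dirac (x₀, f x₀)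
      with hm_def
    have hm_meas : Measurable m := by
      refine Measure.measurable_of_measurable_coe _ fun D hD => ?_
      have : (fun t => m t D) = fun t => if 0 ≤ t then μ t D else Measure.dirac (x₀, f x₀) D := by
        funext t
        simp only [hm_def]
        by_cases h : 0 ≤ t <;> simp [h]
      rw [this]
      exact Measurable.ite measurableSet_Ici (hmeas D hD) measurable_const
    set κ : ProbabilityTheory.Kernel ℝ (X × A) := ⟨m, hm_meas⟩ with hκ_def
    have hκ_app : ∀ t, κ t = m t := fun t => rfl
    have : ProbabilityTheory.IsFiniteKernel κ := by
      refine ⟨⟨1, ENNReal.one_lt_top, fun t => ?_⟩⟩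
      rw [hκ_app, hm_def]
      by_cases h : 0 ≤ t
      · simp only [if_pos h]; exact hsub t h
      · simp [h]
    set ρ := κ.condKernel with hρ_def
    -- The candidate transition probability, corrected on the bad set.
    classical
    set φ : ℝ × X → Measure A := fun p =>
      if ρ p {a : A | (p.2, a) ∈ Gr} = 1 then ρ p else Measure.dirac (f p.2) with hφ_def
    have hGr2 : MeasurableSet {q : (ℝ × X) × A | (q.1.2, q.2) ∈ Gr} := by
      exact (measurable_snd.comp measurable_fst).prodMk measurable_snd hGr
    have hg : Measurable fun p : ℝ × X => ρ p {a : A | (p.2, a) ∈ Gr} := by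
      have := ProbabilityTheory.Kernel.measurable_kernel_prodMk_left (κ := ρ) hGr2
      simpa using this
    have hφ_prob : ∀ p : ℝ × X, IsProbabilityMeasure (φ p) := by
      intro p
      rw [hφ_def]
      by_cases h : ρ p {a : A | (p.2, a) ∈ Gr} = 1
      · simpa [h] using (ProbabilityTheory.Kernel.instIsMarkovKernelCondKernel κ).isProbabilityMeasure p
      · simp only [if_neg h]; infer_instance
    refine ⟨φ, hφ_prob, ?_, ?_, ?_⟩
    · -- measurability of `p ↦ φ p U`
      intro U hU
      have h1 : Measurable fun p : ℝ × X => ρ p U := ρ.measurable_coe hU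
      have h2 : Measurable fun p : ℝ × X => Measure.dirac (f p.2) U := by
        have : (fun p : ℝ × X => Measure.dirac (f p.2) U)
            = fun p : ℝ × X => U.indicator (1 : A → ℝ≥0∞) (f p.2) := by
          funext p; rw [Measure.dirac_apply' _ hU]
        rw [this]
        exact (measurable_one.indicator hU).comp (hf.comp measurable_snd)
      have : (fun p : ℝ × X => φ p U)
          = fun p : ℝ × X => if ρ p {a : A | (p.2, a) ∈ Gr} = 1 then ρ p U
            else Measure.dirac (f p.2) U := by
        funext p
        rw [hφ_def]
        by_cases h : ρ p {a : A | (p.2, a) ∈ Gr} = 1 <;> simp [h]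
      rw [this]
      exact Measurable.ite (hg (measurableSet_singleton 1)) h1 h2
    · -- `φ (t, x) (A x) = 1`
      intro x t _
      rw [hφ_def]
      by_cases h : ρ (t, x) {a : A | ((t, x).2, a) ∈ Gr} = 1
      · simp only [if_pos h]; exact h
      · simp only [h, if_false]
        exact Measure.dirac_apply_of_mem (hfGr x)
    · -- Radon–Nikodym property
      intro t ht U hU B hB
      have hκt : κ t = μ t := by rw [hκ_app, hm_def]; simp [ht]
      have hfst : κ.fst t = (μ t).map Prod.fst := by
        rw [ProbabilityTheory.Kernel.fst_apply, hκt]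
      have hdis := κ.disintegrate κ.condKernel
      -- a.e. concentration of `ρ (t, ·)` on sections of `Gr`
      have hcompl : κ t Grᶜ = 0 := by rw [hκt]; exact hsupp t ht
      rw [← hdis] at hcompl
      rw [ProbabilityTheory.Kernel.compProd_apply hGr.compl] at hcompl
      have hmeas_sec : Measurable fun x : X => ρ (t, x) {a : A | (x, a) ∈ Grᶜ} := by
        have := ProbabilityTheory.Kernel.measurable_kernel_prodMk_left' (η := ρ)
          (hGr.compl) t
        exact this
      replace hcompl := (lintegral_eq_zero_iff hmeas_sec).mp hcompl
      have hae : ∀ᵐ x ∂((μ t).map Prod.fst), ρ (t, x) {a : A | (x, a) ∈ Gr} = 1 := by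
        rw [← hfst]
        filter_upwards [hcompl] with x hx
        have : IsProbabilityMeasure (ρ (t, x)) :=
          (ProbabilityTheory.Kernel.instIsMarkovKernelCondKernel κ).isProbabilityMeasure _
        have hsec : MeasurableSet {a : A | (x, a) ∈ Gr} := measurable_prodMk_left hGr
        have hx' : ρ (t, x) {a : A | (x, a) ∈ Gr}ᶜ = 0 := by
          simpa [Set.compl_setOf] using hx
        exact (prob_compl_eq_zero_iff hsec).mp hx'
      -- the disintegration identity
      have hprod : κ t (B ×ˢ U) = ∫⁻ x in B, ρ (t, x) U ∂(κ.fst t) := by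
        conv_lhs => rw [← hdis]
        rw [ProbabilityTheory.Kernel.compProd_apply (hB.prod hU)]
        have : ∀ x : X, ρ (t, x) {a : A | (x, a) ∈ B ×ˢ U}
            = B.indicator (fun x => ρ (t, x) U) x := by
          intro x
          by_cases hx : x ∈ B
          · simp only [indicator_of_mem hx]
            congr 1
            ext a; simp [Set.mem_prod, hx]
          · simp only [indicator_of_notMem hx]
            rw [show {a : A | (x, a) ∈ B ×ˢ U} = ∅ from by ext a; simp [hx], measure_empty]
        change ∫⁻ b, ρ (t, b) {a : A | (b, a) ∈ B ×ˢ U} ∂(κ.fst t) = _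
        simp_rw [this]
        rw [lintegral_indicator hB]
      rw [hκt, hfst] at hprod
      rw [hprod]
      refine lintegral_congr_ae (ae_restrict_of_ae ?_)
      filter_upwards [hae] with x hx
      rw [hφ_def]
      simp only [hx, if_true]
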